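/- Let α ∈ ℕ^{m×n} and let X ⊆ ℝⁿ be sign-symmetric, given by X = cl{ x : 0 < |x|, H(|x|) ≤ 1 } for continuous H : ℝⁿ → ℝ^r (absolute values taken entrywise). Set Y = { y : H(exp y) ≤ 1 }. Then c ∈ C_POLY-SAGE(α,X) if and only if the set SR(α,c) ∩ C_SAGE(α,Y) is nonempty, where SR(α,c) = { ĉ ∈ ℝᵐ : ĉᵢ = cᵢ whenever αᵢ ∈ (2ℕ)ⁿ, and ĉᵢ ≤ −|cᵢ| whenever αᵢ ∉ (2ℕ)ⁿ } is the set of signomial-representative coefficient vectors. -/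

import Mathlib

open Finset

/-- Exponential-form signomial: `Sig α c x = ∑ i, c i * exp (αᵢ · x)`. -/
noncomputable def Sig {n m : ℕ} (α : Fin m → Fin n → ℝ) (c : Fin m → ℝ)
    (x : Fin n → ℝ) : ℝ :=
  ∑ i, c i * Real.exp (∑ j, α i j * x j)

/-- The `k`-th conditional AGE cone. -/
def CAGE {n m : ℕ} (α : Fin m → Fin n → ℝ) (k : Fin m) (X : Set (Fin n → ℝ)) :
    Set (Fin m → ℝ) :=
  {c | (∀ i, i ≠ k → 0 ≤ c i) ∧ ∀ x ∈ X, 0 ≤ Sig α c x}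

/-- The conditional SAGE cone: Minkowski sum of the conditional AGE cones. -/
def CSAGE {n m : ℕ} (α : Fin m → Fin n → ℝ) (X : Set (Fin n → ℝ)) :
    Set (Fin m → ℝ) :=
  {c | ∃ d : Fin m → Fin m → ℝ, (∀ k, d k ∈ CAGE α k X) ∧ c = ∑ k, d k}

/-- A polynomial with exponent matrix `α` and coefficient vector `c`. -/
noncomputable def PolyFn {n m : ℕ} (α : Fin m → Fin n → ℕ) (c : Fin m → ℝ)
    (x : Fin n → ℝ) : ℝ :=
  ∑ i, c i * ∏ j, x j ^ α i j

/-- The `i`-th conditional AGE polynomial cone. -/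
def CPolyAGE {n m : ℕ} (α : Fin m → Fin n → ℕ) (i : Fin m)
    (X : Set (Fin n → ℝ)) : Set (Fin m → ℝ) :=
  {c | (∀ x ∈ X, 0 ≤ PolyFn α c x) ∧
       (∀ j, j ≠ i → (∃ x ∈ X, 0 < ∏ t, x t ^ α j t) → 0 ≤ c j) ∧
       (∀ j, j ≠ i → (∃ x ∈ X, ∏ t, x t ^ α j t < 0) → c j ≤ 0)}

/-- The conditional SAGE polynomial cone. -/
def CPolySAGE {n m : ℕ} (α : Fin m → Fin n → ℕ) (X : Set (Fin n → ℝ)) :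
    Set (Fin m → ℝ) :=
  {c | ∃ d : Fin m → Fin m → ℝ, (∀ i, d i ∈ CPolyAGE α i X) ∧ c = ∑ i, d i}

/-- The set of signomial-representative coefficient vectors. -/
def SR {n m : ℕ} (α : Fin m → Fin n → ℕ) (c : Fin m → ℝ) : Set (Fin m → ℝ) :=
  {ch | (∀ i, (∀ t, Even (α i t)) → ch i = c i) ∧
        (∀ i, ¬ (∀ t, Even (α i t)) → ch i ≤ -|c i|)}
section AuxLemmas

lemma Sig_comb {n m : ℕ} (α : Fin m → Fin n → ℝ) (a b : ℝ) (f g : Fin m → ℝ)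
    (x : Fin n → ℝ) :
    Sig α (fun i => a * f i + b * g i) x = a * Sig α f x + b * Sig α g x := by
  simp only [Sig, add_mul, mul_assoc, Finset.sum_add_distrib, Finset.mul_sum]

lemma Sig_eq_polyFn {n m : ℕ} (α : Fin m → Fin n → ℕ) (d : Fin m → ℝ)
    (y : Fin n → ℝ) :
    Sig (fun i j => (α i j : ℝ)) d y = PolyFn α d (fun t => Real.exp (y t)) := by
  unfold Sig PolyFn
  refine Finset.sum_congr rfl fun i _ => ?_
  rw [Real.exp_sum]
  congr 1
  exact Finset.prod_congr rfl fun j _ => Real.exp_nat_mul _ _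

lemma even_prod_eq {n : ℕ} (a : Fin n → ℕ) (ha : ∀ t, Even (a t)) (u v : Fin n → ℝ)
    (huv : ∀ t, |u t| = |v t|) : ∏ t, u t ^ a t = ∏ t, v t ^ a t :=
  Finset.prod_congr rfl fun t _ => by
    rw [← (ha t).pow_abs (u t), huv t, (ha t).pow_abs]

lemma even_prod_nonneg {n : ℕ} (a : Fin n → ℕ) (ha : ∀ t, Even (a t)) (x : Fin n → ℝ) :
    0 ≤ ∏ t, x t ^ a t :=
  Finset.prod_nonneg fun t _ => (ha t).pow_nonneg _

lemma flip_prod {n : ℕ} (x : Fin n → ℝ) (t0 : Fin n) (a : Fin n → ℕ)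
    (h : ¬ Even (a t0)) :
    ∏ t, (Function.update x t0 (-(x t0))) t ^ a t = -∏ t, x t ^ a t := by
  rw [← Finset.mul_prod_erase Finset.univ (fun t => (Function.update x t0 (-(x t0))) t ^ a t)
    (Finset.mem_univ t0),
    ← Finset.mul_prod_erase Finset.univ (fun t => x t ^ a t) (Finset.mem_univ t0)]
  have h1 : ∏ t ∈ Finset.univ.erase t0, (Function.update x t0 (-(x t0))) t ^ a t
      = ∏ t ∈ Finset.univ.erase t0, x t ^ a t :=
    Finset.prod_congr rfl fun t ht => by
      rw [Function.update_of_ne (Finset.mem_erase.mp ht).1]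
  rw [h1, Function.update_self, (Nat.not_even_iff_odd.mp h).neg_pow, neg_mul]

end AuxLemmas
lemma sparsify {n m : ℕ} (α : Fin m → Fin n → ℝ) (Y : Set (Fin n → ℝ))
    (P : Finset (Fin m)) (c : Fin m → ℝ) (hP : ∀ j ∈ P, c j ≤ 0)
    (h : c ∈ CSAGE α Y) :
    ∃ d : Fin m → Fin m → ℝ, (∀ k, d k ∈ CAGE α k Y) ∧ c = ∑ k, d k ∧
      ∀ j ∈ P, ∀ k, k ≠ j → d k j = 0 := by
  classical
  induction P using Finset.induction_on with
  | empty =>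
      obtain ⟨d, hd, hsum⟩ := h
      exact ⟨d, hd, hsum, by simp⟩
  | @insert j P hjP ih =>
      obtain ⟨d, hd, hsum, hz⟩ := ih fun j' hj' => hP j' (Finset.mem_insert_of_mem hj')
      have hsum' : ∀ i, c i = ∑ l, d l i := fun i => by
        rw [hsum]; exact Finset.sum_apply i Finset.univ d
      have hTnn : ∀ l, l ≠ j → 0 ≤ d l j := fun l hl => (hd l).1 j (Ne.symm hl)
      set T : Finset (Fin m) := Finset.univ.erase j with hT
      set t : ℝ := ∑ l ∈ T, d l j with htdef
      have htnn : 0 ≤ t := Finset.sum_nonneg fun l hl => hTnn l (Finset.mem_erase.mp hl).1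
      by_cases ht : t = 0
      · have hall : ∀ l ∈ T, d l j = 0 :=
          (Finset.sum_eq_zero_iff_of_nonneg fun l hl => hTnn l (Finset.mem_erase.mp hl).1).mp ht
        refine ⟨d, hd, hsum, ?_⟩
        intro j' hj' k hk
        rcases Finset.mem_insert.mp hj' with h1 | h1
        · subst h1; exact hall k (Finset.mem_erase.mpr ⟨hk, Finset.mem_univ k⟩)
        · exact hz j' h1 k hk
      · have htpos : 0 < t := lt_of_le_of_ne htnn (Ne.symm ht)
        have hcj : c j ≤ 0 := hP j (Finset.mem_insert_self j P)
        have hdjj : c j = d j j + t := by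
          rw [hsum' j, ← Finset.add_sum_erase Finset.univ (fun l => d l j) (Finset.mem_univ j)]
        set D : ℝ := -(d j j) with hDdef
        have hD : 0 < D := by simp only [hDdef]; linarith
        set θ : Fin m → ℝ := fun l => d l j / D with hθdef
        set s : ℝ := t / D with hsdef
        have hs1 : s ≤ 1 := by rw [hsdef, div_le_one hD]; linarith
        have hs0 : 0 ≤ s := div_nonneg htpos.le hD.le
        have hθnn : ∀ l, l ≠ j → 0 ≤ θ l := fun l hl => div_nonneg (hTnn l hl) hD.le
        have hθsum : ∑ l ∈ T, θ l = s := by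
          rw [hθdef, hsdef, ← Finset.sum_div, htdef]
        set d' : Fin m → Fin m → ℝ :=
          fun l i => if l = j then (1 - s) * d j i else d l i + θ l * d j i with hd'def
        have hdjD : d j j = -D := by simp [hDdef]
        have key0 : ∀ l, l ≠ j → d' l j = 0 := by
          intro l hl
          simp only [hd'def, if_neg hl, hθdef, hdjD]
          field_simp
          ring
        refine ⟨d', fun k => ?_, ?_, ?_⟩
        · by_cases hk : k = j
          · subst hk
            refine ⟨fun i hik => ?_, fun y hy => ?_⟩
            · simp only [hd'def, if_pos rfl]
              exact mul_nonneg (by linarith) ((hd k).1 i hik)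
            · have heq : Sig α (d' k) y = (1 - s) * Sig α (d k) y + 0 * Sig α (d k) y := by
                rw [← Sig_comb]
                congr 1
                funext i
                simp [hd'def]
              rw [heq]
              have := (hd k).2 y hy
              nlinarith
          · refine ⟨fun i hik => ?_, fun y hy => ?_⟩
            · by_cases hij : i = j
              · subst hij; rw [key0 k hk]
              · simp only [hd'def, if_neg hk]
                exact add_nonneg ((hd k).1 i hik) (mul_nonneg (hθnn k hk) ((hd j).1 i hij))
            · have heq : Sig α (d' k) y = 1 * Sig α (d k) y + θ k * Sig α (d j) y := by
                rw [← Sig_comb]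
                congr 1
                funext i
                simp [hd'def, hk]
              rw [heq]
              have h1 := (hd k).2 y hy
              have h2 := mul_nonneg (hθnn k hk) ((hd j).2 y hy)
              linarith
        · funext i
          rw [Finset.sum_apply i Finset.univ d']
          rw [← Finset.add_sum_erase Finset.univ (fun l => d' l i) (Finset.mem_univ j)]
          have : ∑ l ∈ Finset.univ.erase j, d' l i
              = (∑ l ∈ T, d l i) + (∑ l ∈ T, θ l) * d j i := by
            rw [Finset.sum_mul, ← Finset.sum_add_distrib]
            exact Finset.sum_congr rfl fun l hl => by
              simp only [hd'def, if_neg (Finset.mem_erase.mp hl).1]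
          rw [this, hθsum]
          simp only [hd'def, if_pos rfl]
          have : c i = d j i + ∑ l ∈ T, d l i := by
            rw [hsum' i, ← Finset.add_sum_erase Finset.univ (fun l => d l i) (Finset.mem_univ j)]
          rw [this]; ring
        · intro j' hj' k hk
          rcases Finset.mem_insert.mp hj' with h1 | h1
          · subst h1; exact key0 k hk
          · have hjj' : j ≠ j' := fun hcon => hjP (hcon ▸ h1)
            have hdjj' : d j j' = 0 := hz j' h1 j hjj'
            by_cases hkj : k = j
            · subst hkj; simp only [hd'def, if_pos rfl, hdjj', mul_zero]
            · simp only [hd'def, if_neg hkj, hdjj', mul_zero, add_zero]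
              exact hz j' h1 k hk
/-- For sign-symmetric X, membership in the conditional SAGE polynomial cone is
equivalent to existence of a signomial representative in the conditional SAGE
signomial cone over Y. -/
theorem cpolysage_iff_sigrep {n m r : ℕ} (α : Fin m → Fin n → ℕ)
    (H : (Fin n → ℝ) → (Fin r → ℝ)) (hH : Continuous H)
    (X : Set (Fin n → ℝ))
    (hX : X = closure {x : Fin n → ℝ | (∀ j, 0 < |x j|) ∧ ∀ s, H (fun j => |x j|) s ≤ 1})
    (c : Fin m → ℝ) :
    c ∈ CPolySAGE α X ↔
      (SR α c ∩
        CSAGE (fun i j => (α i j : ℝ))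
          {y : Fin n → ℝ | ∀ s, H (fun j => Real.exp (y j)) s ≤ 1}).Nonempty := by
  classical
  set S : Set (Fin n → ℝ) :=
    {x : Fin n → ℝ | (∀ j, 0 < |x j|) ∧ ∀ s, H (fun j => |x j|) s ≤ 1} with hSdef
  set Y : Set (Fin n → ℝ) :=
    {y : Fin n → ℝ | ∀ s, H (fun j => Real.exp (y j)) s ≤ 1} with hYdef
  have hSX : S ⊆ X := hX ▸ subset_closure
  constructor
  · rintro ⟨e, he, hce⟩
    have hce' : ∀ j, c j = ∑ i, e i j := fun j => by
      rw [hce]; exact Finset.sum_apply j Finset.univ e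
    by_cases hYne : Y.Nonempty
    · obtain ⟨y0, hy0⟩ := hYne
      set x0 : Fin n → ℝ := fun t => Real.exp (y0 t) with hx0
      have hx0pos : ∀ t, 0 < x0 t := fun t => Real.exp_pos _
      have hx0S : x0 ∈ S := by
        constructor
        · intro t; rw [abs_of_pos (hx0pos t)]; exact hx0pos t
        · intro s
          have h1 : (fun j => |x0 j|) = fun j => Real.exp (y0 j) :=
            funext fun j => abs_of_pos (hx0pos j)
          rw [h1]; exact hy0 s
      have hpos : ∀ j, 0 < ∏ t, x0 t ^ α j t := fun j =>
        Finset.prod_pos fun t _ => pow_pos (hx0pos t) _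
      have hflipS : ∀ (x : Fin n → ℝ), x ∈ S → ∀ t0, Function.update x t0 (-(x t0)) ∈ S := by
        intro x hx t0
        have habs : ∀ t, |Function.update x t0 (-(x t0)) t| = |x t| := by
          intro t
          rcases eq_or_ne t t0 with h | h
          · subst h; rw [Function.update_self, abs_neg]
          · rw [Function.update_of_ne h]
        refine ⟨fun t => (habs t) ▸ hx.1 t, fun s => ?_⟩
        have h1 : (fun j => |Function.update x t0 (-(x t0)) j|) = fun j => |x j| := funext habs
        rw [h1]; exact hx.2 s
      have hneg : ∀ j, ¬(∀ t, Even (α j t)) → ∃ x ∈ X, ∏ t, x t ^ α j t < 0 := by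
        intro j hj
        obtain ⟨t0, ht0⟩ := not_forall.mp hj
        refine ⟨Function.update x0 t0 (-(x0 t0)), hSX (hflipS x0 hx0S t0), ?_⟩
        rw [flip_prod x0 t0 (α j) ht0]
        linarith [hpos j]
      have hnn : ∀ i j, j ≠ i → 0 ≤ e i j := fun i j hji =>
        (he i).2.1 j hji ⟨x0, hSX hx0S, hpos j⟩
      have hzero : ∀ i j, j ≠ i → ¬(∀ t, Even (α j t)) → e i j = 0 := fun i j hji hj =>
        le_antisymm ((he i).2.2 j hji (hneg j hj)) (hnn i j hji)
      refine ⟨fun j => if (∀ t, Even (α j t)) then c j else -|c j|,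
        ⟨fun i hi => if_pos hi, fun i hi => le_of_eq (if_neg hi)⟩,
        fun i j => if (∀ t, Even (α j t)) then e i j
          else if j = i then -|e i i| else 0, fun i => ⟨?_, ?_⟩, ?_⟩
      · intro j hji
        by_cases hj : ∀ t, Even (α j t)
        · simp only [if_pos hj]; exact hnn i j hji
        · simp only [if_neg hj, if_neg hji, le_refl]
      · intro y hy
        beta_reduce
        set x : Fin n → ℝ := fun t => Real.exp (y t) with hxdef
        have hxpos : ∀ t, 0 < x t := fun t => Real.exp_pos _
        have hxS : x ∈ S := by
          refine ⟨fun t => by rw [abs_of_pos (hxpos t)]; exact hxpos t, fun s => ?_⟩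
          have h1 : (fun j => |x j|) = fun j => Real.exp (y j) :=
            funext fun j => abs_of_pos (hxpos j)
          rw [h1]; exact hy s
        rw [Sig_eq_polyFn]
        by_cases hi : ∀ t, Even (α i t)
        · have hcoef : (fun j => if (∀ t, Even (α j t)) then e i j
              else if j = i then -|e i i| else 0) = e i := by
            funext j
            by_cases hj : ∀ t, Even (α j t)
            · rw [if_pos hj]
            · have hji : j ≠ i := fun hcon => hj (hcon ▸ hi)
              rw [if_neg hj, if_neg hji, hzero i j hji hj]
          rw [hcoef]
          exact (he i).1 x (hSX hxS)
        · obtain ⟨t0, ht0⟩ := not_forall.mp hi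
          set x' : Fin n → ℝ :=
            if 0 ≤ e i i then Function.update x t0 (-(x t0)) else x with hx'def
          have hx'S : x' ∈ S := by
            rw [hx'def]; split_ifs
            · exact hflipS x hxS t0
            · exact hxS
          have habs' : ∀ t, |x' t| = |x t| := by
            intro t; rw [hx'def]; split_ifs with hsi
            · rcases eq_or_ne t t0 with h | h
              · subst h; rw [Function.update_self, abs_neg]
              · rw [Function.update_of_ne h]
            · rfl
          have hkey : e i i * ∏ t, x' t ^ α i t = -|e i i| * ∏ t, x t ^ α i t := by
            rw [hx'def]; split_ifs with hsi
            · rw [flip_prod x t0 (α i) ht0, abs_of_nonneg hsi]; ring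
            · rw [abs_of_neg (lt_of_not_ge hsi)]; ring
          have heq : PolyFn α (fun j => if (∀ t, Even (α j t)) then e i j
              else if j = i then -|e i i| else 0) x = PolyFn α (e i) x' := by
            unfold PolyFn
            refine Finset.sum_congr rfl fun j _ => ?_
            beta_reduce
            by_cases hj : ∀ t, Even (α j t)
            · rw [if_pos hj, even_prod_eq (α j) hj x x' (fun t => (habs' t).symm)]
            · rcases eq_or_ne j i with h1 | h1
              · subst h1; rw [if_neg hj, if_pos rfl]; exact hkey.symm
              · rw [if_neg hj, if_neg h1, hzero i j h1 hj, zero_mul, zero_mul]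
          rw [heq]
          exact (he i).1 x' (hSX hx'S)
      · funext j
        rw [Finset.sum_apply j Finset.univ _]
        by_cases hj : ∀ t, Even (α j t)
        · simp only [if_pos hj]
          exact hce' j
        · simp only [if_neg hj]
          have hrw : ∀ i, (if j = i then -|e i i| else (0:ℝ)) = if j = i then -|e j j| else 0 := by
            intro i
            rcases eq_or_ne j i with h | h
            · subst h; rfl
            · rw [if_neg h, if_neg h]
          rw [Finset.sum_congr rfl fun i _ => hrw i,
            Finset.sum_ite_eq Finset.univ j (fun _ => -|e j j|)]
          simp only [Finset.mem_univ, if_true]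
          have hcj : c j = e j j := by
            rw [hce' j,
              ← Finset.add_sum_erase Finset.univ (fun i => e i j) (Finset.mem_univ j),
              Finset.sum_eq_zero
                (fun i hi => hzero i j (Ne.symm (Finset.mem_erase.mp hi).1) hj),
              add_zero]
          rw [hcj]
    · refine ⟨fun j => if (∀ t, Even (α j t)) then c j else -|c j|,
        ⟨fun i hi => if_pos hi, fun i hi => le_of_eq (if_neg hi)⟩,
        fun k j => if j = k then (if (∀ t, Even (α j t)) then c j else -|c j|) else 0,
        fun k => ⟨fun i hik => le_of_eq (if_neg hik).symm, fun y hy => absurd ⟨y, hy⟩ hYne⟩, ?_⟩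
      funext j
      rw [Finset.sum_apply j Finset.univ _]
      have hrw : ∀ k, (if j = k then (if (∀ t, Even (α j t)) then c j else -|c j|) else (0:ℝ))
          = if j = k then (fun _ : Fin m => if (∀ t, Even (α j t)) then c j else -|c j|) k else 0 :=
        fun k => rfl
      rw [Finset.sum_congr rfl fun k _ => hrw k,
        Finset.sum_ite_eq Finset.univ j (fun _ => if (∀ t, Even (α j t)) then c j else -|c j|)]
      simp only [Finset.mem_univ, if_true]
  · rintro ⟨ch, ⟨hSR1, hSR2⟩, hsage⟩
    have hP : ∀ j ∈ Finset.univ.filter (fun j => ¬∀ t, Even (α j t)), ch j ≤ 0 := by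
      intro j hj
      have h1 := hSR2 j (Finset.mem_filter.mp hj).2
      have h2 := abs_nonneg (c j); linarith
    obtain ⟨d, hd, hsum, hzero⟩ := sparsify (fun i j => (α i j : ℝ)) Y
      (Finset.univ.filter (fun j => ¬∀ t, Even (α j t))) ch hP hsage
    have hsum' : ∀ i, ch i = ∑ l, d l i := fun i => by
      rw [hsum]; exact Finset.sum_apply i Finset.univ d
    have hz' : ∀ j, ¬(∀ t, Even (α j t)) → ∀ k, k ≠ j → d k j = 0 := fun j hj =>
      hzero j (Finset.mem_filter.mpr ⟨Finset.mem_univ j, hj⟩)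
    have hdiag : ∀ j, ¬(∀ t, Even (α j t)) → d j j = ch j := by
      intro j hj
      rw [hsum' j,
        ← Finset.add_sum_erase Finset.univ (fun l => d l j) (Finset.mem_univ j),
        Finset.sum_eq_zero (fun l hl => hz' j hj l (Finset.mem_erase.mp hl).1), add_zero]
    refine ⟨fun i j => if (∀ t, Even (α j t)) then d i j else if j = i then c j else 0,
      fun i => ⟨?_, ?_, ?_⟩, ?_⟩
    · -- nonnegativity of PolyFn on X
      intro x hxX
      beta_reduce
      have hcont : Continuous (PolyFn α
          (fun j => if (∀ t, Even (α j t)) then d i j else if j = i then c j else 0)) := by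
        unfold PolyFn
        exact continuous_finset_sum _ fun j _ => (continuous_const.mul
          (continuous_finset_prod _ fun t _ => (continuous_apply t).pow _))
      have hSsub : S ⊆ {z | 0 ≤ PolyFn α
          (fun j => if (∀ t, Even (α j t)) then d i j else if j = i then c j else 0) z} := by
        intro z hzS
        set y : Fin n → ℝ := fun t => Real.log |z t| with hydef
        have hyY : y ∈ Y := by
          intro s
          have h1 : (fun j => Real.exp (y j)) = fun j => |z j| :=
            funext fun j => Real.exp_log (hzS.1 j)
          rw [h1]; exact hzS.2 s
        have hsig := (hd i).2 y hyY
        rw [Sig_eq_polyFn] at hsig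
        have hxy : (fun t => Real.exp (y t)) = fun t => |z t| :=
          funext fun t => Real.exp_log (hzS.1 t)
        rw [hxy] at hsig
        have hge : PolyFn α (d i) (fun t => |z t|) ≤ PolyFn α
            (fun j => if (∀ t, Even (α j t)) then d i j else if j = i then c j else 0) z := by
          unfold PolyFn
          refine Finset.sum_le_sum fun j _ => ?_
          beta_reduce
          by_cases hj : ∀ t, Even (α j t)
          · simp only [if_pos hj]
            rw [even_prod_eq (α j) hj (fun t => |z t|) z (fun t => abs_abs (z t))]
          · rcases eq_or_ne j i with h1 | h1
            · subst h1
              simp only [if_neg hj, eq_self_iff_true, if_true]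
              have hde : d j j = ch j := hdiag j hj
              have h2 : ch j ≤ -|c j| := hSR2 j hj
              have h3 : (0:ℝ) ≤ ∏ t, |z t| ^ α j t :=
                Finset.prod_nonneg fun t _ => pow_nonneg (abs_nonneg _) _
              have habs : |c j * ∏ t, z t ^ α j t| = |c j| * ∏ t, |z t| ^ α j t := by
                rw [abs_mul, Finset.abs_prod]
                congr 1
                exact Finset.prod_congr rfl fun t _ => abs_pow _ _
              have h4 : d j j * ∏ t, |z t| ^ α j t ≤ -|c j| * ∏ t, |z t| ^ α j t :=
                mul_le_mul_of_nonneg_right (by rw [hde]; exact h2) h3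
              have h5 : -|c j| * ∏ t, |z t| ^ α j t ≤ c j * ∏ t, z t ^ α j t := by
                have h6 := neg_abs_le (c j * ∏ t, z t ^ α j t)
                rw [habs] at h6
                linarith
              linarith
            · simp only [if_neg hj, if_neg h1, hz' j hj i (Ne.symm h1), zero_mul, le_refl]
        show (0:ℝ) ≤ _
        linarith
      exact closure_minimal hSsub (isClosed_le continuous_const hcont) (hX ▸ hxX)
    · intro j hji hex
      by_cases hj : ∀ t, Even (α j t)
      · simp only [if_pos hj]; exact (hd i).1 j hji
      · simp only [if_neg hj, if_neg hji, le_refl]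
    · intro j hji hex
      by_cases hj : ∀ t, Even (α j t)
      · obtain ⟨x, hxX, hxlt⟩ := hex
        exact absurd hxlt (not_lt.mpr (even_prod_nonneg (α j) hj x))
      · simp only [if_neg hj, if_neg hji, le_refl]
    · funext j
      rw [Finset.sum_apply j Finset.univ _]
      by_cases hj : ∀ t, Even (α j t)
      · simp only [if_pos hj]
        rw [← hsum' j]
        exact (hSR1 j hj).symm
      · simp only [if_neg hj]
        rw [Finset.sum_ite_eq Finset.univ j (fun _ => c j)]
        simp only [Finset.mem_univ, if_true]
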